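/- Let n ≥ 3, k ≥ 1, and 0 < ε < 1/(100k). For every linear map L = (L_1,...,L_k) : ℝⁿ → (ℝⁿ)^k with det L_i ≥ 0 for each i and satisfying ‖L‖ⁿ ≤ (1+ε) Σ_{i=1}^k det L_i, there exists an index i_0 such that ‖L_{i_0}‖ⁿ ≤ (1 + 7k√ε) det L_{i_0}, ‖L_{i_0}‖ ≥ ‖L‖/(1+ε), and ‖L_i‖ ≤ 5√k ε^{1/4} ‖L‖ for all i ≠ i_0. -/

import Mathlib

open Finset

lemma hadamard_det (n : ℕ)
    (b : OrthonormalBasis (Fin n) ℝ (EuclideanSpace ℝ (Fin n)))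
    (T : EuclideanSpace ℝ (Fin n) →ₗ[ℝ] EuclideanSpace ℝ (Fin n)) :
    |LinearMap.det T| ≤ ∏ i, ‖T (b i)‖ := by
  haveI : Fact (Module.finrank ℝ (EuclideanSpace ℝ (Fin n)) = n) :=
    ⟨finrank_euclideanSpace_fin⟩
  set o : Orientation ℝ (EuclideanSpace ℝ (Fin n)) (Fin n) := b.toBasis.orientation with ho
  have h1 : b.toBasis.det (T ∘ b) = LinearMap.det T := by
    have : (T ∘ ⇑b : Fin n → EuclideanSpace ℝ (Fin n)) = T ∘ ⇑b.toBasis := by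
      simp [OrthonormalBasis.coe_toBasis]
    rw [this, Module.Basis.det_comp, Module.Basis.det_self, mul_one]
  calc |LinearMap.det T| = |b.toBasis.det (T ∘ ⇑b)| := by rw [h1]
    _ = |o.volumeForm (T ∘ ⇑b)| := (o.volumeForm_robust' b _).symm
    _ ≤ ∏ i, ‖T (b i)‖ := o.abs_volumeForm_apply_le _

/-- Lemma A: `|det T| * ‖v‖ ≤ ‖T v‖ * ‖T‖^(n-1)`. -/
lemma det_mul_norm_le (n : ℕ) (hn : n ≠ 0)
    (T : EuclideanSpace ℝ (Fin n) →L[ℝ] EuclideanSpace ℝ (Fin n))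
    (v : EuclideanSpace ℝ (Fin n)) :
    |LinearMap.det (T : EuclideanSpace ℝ (Fin n) →ₗ[ℝ] EuclideanSpace ℝ (Fin n))| * ‖v‖
      ≤ ‖T v‖ * ‖T‖ ^ (n - 1) := by
  rcases eq_or_ne v 0 with rfl | hv
  · simp only [norm_zero, mul_zero, map_zero, zero_mul]; exact le_refl 0
  · have hv' : 0 < ‖v‖ := norm_pos_iff.mpr hv
    set u : EuclideanSpace ℝ (Fin n) := ‖v‖⁻¹ • v with hu
    have hun : ‖u‖ = 1 := norm_smul_inv_norm hv
    set z : Fin n := ⟨0, Nat.pos_of_ne_zero hn⟩ with hz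
    have horth : Orthonormal ℝ
        (({z} : Set (Fin n)).restrict (fun _ : Fin n => u)) := by
      constructor
      · intro i; simpa [Set.restrict] using hun
      · intro i j hij
        exact absurd (Subsingleton.elim i j) hij
    obtain ⟨b, hb⟩ := Orthonormal.exists_orthonormalBasis_extension_of_card_eq
      (𝕜 := ℝ) (by simp [finrank_euclideanSpace_fin]) horth
    have hb0 : b z = u := hb z (by simp)
    have had := hadamard_det n b (T : EuclideanSpace ℝ (Fin n) →ₗ[ℝ] EuclideanSpace ℝ (Fin n))
    have hTb : ∀ i : Fin n, ‖T (b i)‖ ≤ ‖T‖ := by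
      intro i
      have h1 : ‖T (b i)‖ ≤ ‖T‖ * ‖b i‖ := T.le_opNorm _
      have h2 : ‖b i‖ = 1 := b.orthonormal.1 i
      rw [h2, mul_one] at h1; exact h1
    have hprod : ∏ i, ‖T (b i)‖ ≤ ‖T u‖ * ‖T‖ ^ (n - 1) := by
      rw [← Finset.mul_prod_erase Finset.univ (fun i => ‖T (b i)‖) (Finset.mem_univ z)]
      have h3 : ∏ i ∈ Finset.univ.erase z, ‖T (b i)‖ ≤ ‖T‖ ^ (n - 1) := by
        have h4 : ∏ i ∈ Finset.univ.erase z, ‖T (b i)‖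
            ≤ ∏ _i ∈ Finset.univ.erase z, ‖T‖ :=
          Finset.prod_le_prod (fun i _ => norm_nonneg _) (fun i _ => hTb i)
        rwa [Finset.prod_const, Finset.card_erase_of_mem (Finset.mem_univ _),
          Finset.card_univ, Fintype.card_fin] at h4
      have h5 : 0 ≤ ‖T (b z)‖ := norm_nonneg _
      calc ‖T (b z)‖ * ∏ i ∈ Finset.univ.erase z, ‖T (b i)‖
          ≤ ‖T (b z)‖ * ‖T‖ ^ (n - 1) := by
            exact mul_le_mul_of_nonneg_left h3 h5
        _ = ‖T u‖ * ‖T‖ ^ (n - 1) := by rw [hb0]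
    have hTu : ‖T u‖ * ‖v‖ = ‖T v‖ := by
      have : T u = ‖v‖⁻¹ • T v := by rw [hu, map_smul]
      rw [this, norm_smul, norm_inv, norm_norm]
      field_simp
    have := mul_le_mul_of_nonneg_right (had.trans hprod) hv'.le
    calc |LinearMap.det (T : EuclideanSpace ℝ (Fin n) →ₗ[ℝ] EuclideanSpace ℝ (Fin n))| * ‖v‖
        ≤ ‖T u‖ * ‖T‖ ^ (n - 1) * ‖v‖ := this
      _ = ‖T u‖ * ‖v‖ * ‖T‖ ^ (n - 1) := by ring
      _ = ‖T v‖ * ‖T‖ ^ (n - 1) := by rw [hTu]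

/-- Lemma B: `|det T| ≤ sqrt((∑ ‖T (b m)‖²)/n)^n`. -/
lemma det_le_sqrt_avg_pow (n : ℕ) (hn : n ≠ 0)
    (b : OrthonormalBasis (Fin n) ℝ (EuclideanSpace ℝ (Fin n)))
    (T : EuclideanSpace ℝ (Fin n) →ₗ[ℝ] EuclideanSpace ℝ (Fin n)) :
    |LinearMap.det T| ≤ Real.sqrt ((∑ m, ‖T (b m)‖ ^ 2) / n) ^ n := by
  have had := hadamard_det n b T
  set c : Fin n → ℝ := fun m => ‖T (b m)‖ with hc
  have hc0 : ∀ m, 0 ≤ c m := fun m => norm_nonneg _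
  set S : ℝ := ∑ m, c m ^ 2 with hS
  have hS0 : 0 ≤ S := Finset.sum_nonneg fun m _ => sq_nonneg _
  have hn' : (0:ℝ) < n := by positivity
  -- AM-GM : ∏ c m ^ 2 ≤ (S / n)^n
  have hamgm : ∏ m, (c m ^ 2) ≤ (S / n) ^ n := by
    have key := Real.geom_mean_le_arith_mean_weighted Finset.univ
      (fun _ : Fin n => (n : ℝ)⁻¹) (fun m => c m ^ 2)
      (fun i _ => by positivity)
      (by simp [Finset.card_univ]; field_simp)
      (fun i _ => sq_nonneg _)
    -- key : ∏ (c m ^ 2) ^ (n⁻¹ : ℝ) ≤ ∑ n⁻¹ * c m ^ 2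
    have hrhs : ∑ m, (n : ℝ)⁻¹ * c m ^ 2 = S / n := by
      rw [← Finset.mul_sum]; rw [← hS]; ring
    have hlhs : ∀ m : Fin n, (c m ^ 2) = ((c m ^ 2) ^ ((n : ℝ)⁻¹)) ^ n := by
      intro m
      rw [← Real.rpow_natCast ((c m ^ 2) ^ ((n : ℝ)⁻¹)) n, ← Real.rpow_mul (sq_nonneg _),
        inv_mul_cancel₀ (by positivity : (n:ℝ) ≠ 0), Real.rpow_one]
    calc ∏ m, (c m ^ 2) = ∏ m, ((c m ^ 2) ^ ((n : ℝ)⁻¹)) ^ n := by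
          exact Finset.prod_congr rfl fun m _ => hlhs m
      _ = (∏ m, (c m ^ 2) ^ ((n : ℝ)⁻¹)) ^ n := by rw [Finset.prod_pow]
      _ ≤ (S / n) ^ n := by
          apply pow_le_pow_left₀
          · exact Finset.prod_nonneg fun m _ => Real.rpow_nonneg (sq_nonneg _) _
          · rw [← hrhs]; exact key
  have hprod0 : 0 ≤ ∏ m, c m := Finset.prod_nonneg fun m _ => hc0 m
  have hsq : (∏ m, c m) ^ 2 ≤ (Real.sqrt (S / n) ^ n) ^ 2 := by
    have h1 : (∏ m, c m) ^ 2 = ∏ m, (c m ^ 2) := by rw [← Finset.prod_pow]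
    have h2 : (Real.sqrt (S / n) ^ n) ^ 2 = (S / n) ^ n := by
      rw [← pow_mul, mul_comm n 2, pow_mul, Real.sq_sqrt (by positivity)]
    rw [h1, h2]; exact hamgm
  have hfinal : ∏ m, c m ≤ Real.sqrt (S / n) ^ n := by
    nlinarith [hprod0, pow_nonneg (Real.sqrt_nonneg (S / n)) n]
  exact had.trans hfinal


section helpers

lemma sqle_aux {a b : ℝ} (ha : 0 ≤ a) (hb : 0 ≤ b) (h : a ^ 2 ≤ b ^ 2) : a ≤ b := by
  nlinarith

end helpers

set_option maxHeartbeats 2000000 in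
set_option synthInstance.maxHeartbeats 200000 in
/-- For `n ≥ 3`, `k ≥ 1`, `0 < ε < 1/(100k)`: a linear map `L = (L₁,…,L_k) : ℝⁿ → (ℝⁿ)^k`
with `det Lᵢ ≥ 0` and `‖L‖ⁿ ≤ (1+ε) ∑ᵢ det Lᵢ` has an index `i₀` with
`‖L_{i₀}‖ⁿ ≤ (1 + 7k√ε) det L_{i₀}`, `‖L_{i₀}‖ ≥ ‖L‖/(1+ε)`, and
`‖Lᵢ‖ ≤ 5√k ε^{1/4} ‖L‖` for `i ≠ i₀`. -/
theorem almost_calibrated_linear_map (n k : ℕ) (hn : 3 ≤ n) (hk : 1 ≤ k)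
    (ε : ℝ) (hε : 0 < ε) (hε' : ε < 1 / (100 * k))
    (L : EuclideanSpace ℝ (Fin n) →L[ℝ]
        PiLp 2 (fun _ : Fin k => EuclideanSpace ℝ (Fin n)))
    (Li : Fin k → (EuclideanSpace ℝ (Fin n) →L[ℝ] EuclideanSpace ℝ (Fin n)))
    (hLi : ∀ i v, Li i v = L v i)
    (hdet : ∀ i, 0 ≤ LinearMap.det
        ((Li i : EuclideanSpace ℝ (Fin n) →ₗ[ℝ] EuclideanSpace ℝ (Fin n))))
    (hL : ‖L‖ ^ n ≤ (1 + ε) * ∑ i, LinearMap.det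
        ((Li i : EuclideanSpace ℝ (Fin n) →ₗ[ℝ] EuclideanSpace ℝ (Fin n)))) :
    ∃ i₀ : Fin k,
      ‖Li i₀‖ ^ n ≤ (1 + 7 * k * Real.sqrt ε) * LinearMap.det
          ((Li i₀ : EuclideanSpace ℝ (Fin n) →ₗ[ℝ] EuclideanSpace ℝ (Fin n))) ∧
      ‖L‖ / (1 + ε) ≤ ‖Li i₀‖ ∧
      ∀ i, i ≠ i₀ → ‖Li i‖ ≤ 5 * Real.sqrt k * ε ^ ((1 : ℝ) / 4) * ‖L‖ := by
  classical
  have hn0 : n ≠ 0 := by omega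
  have hk1 : (1:ℝ) ≤ (k:ℝ) := by exact_mod_cast hk
  have h1ε : (0:ℝ) < 1 + ε := by linarith
  have hε100 : ε ≤ 1 / 100 := by
    have h2 : (100:ℝ) ≤ 100 * (k:ℝ) := by linarith only [hk1]
    have h3 : 1 / (100 * (k:ℝ)) ≤ 1 / 100 :=
      one_div_le_one_div_of_le (by norm_num) h2
    linarith only [hε', h3]
  set M := ‖L‖ with hM
  have hM0 : (0:ℝ) ≤ M := norm_nonneg _
  -- Pythagoras
  have pyth : ∀ v, ∑ i, ‖Li i v‖ ^ 2 = ‖L v‖ ^ 2 := by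
    intro v
    rw [PiLp.norm_sq_eq_of_L2]
    exact Finset.sum_congr rfl fun i _ => by rw [hLi]
  have hLiM : ∀ i, ‖Li i‖ ≤ M := by
    intro i
    refine ContinuousLinearMap.opNorm_le_bound _ hM0 fun v => ?_
    have h1 : ‖Li i v‖ ^ 2 ≤ ‖L v‖ ^ 2 := by
      rw [← pyth v]
      exact Finset.single_le_sum (f := fun j => ‖Li j v‖ ^ 2)
        (fun j _ => sq_nonneg _) (Finset.mem_univ i)
    have h2 : ‖Li i v‖ ≤ ‖L v‖ := sqle_aux (norm_nonneg _) (norm_nonneg _) h1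
    exact h2.trans (L.le_opNorm v)
  -- degenerate case
  rcases eq_or_lt_of_le hM0 with hMz | hMpos
  · -- ‖L‖ = 0
    have hM0' : M = 0 := hMz.symm
    have hLiz : ∀ i, Li i = 0 := by
      intro i
      ext v
      have := hLiM i
      rw [hM0'] at this
      have h0 : ‖Li i‖ = 0 := le_antisymm this (norm_nonneg _)
      have : Li i = 0 := norm_eq_zero.mp h0
      simp [this]
    haveI : Nonempty (Fin n) := ⟨⟨0, by omega⟩⟩
    have hdz : ∀ i, LinearMap.det ((Li i : EuclideanSpace ℝ (Fin n) →ₗ[ℝ]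
        EuclideanSpace ℝ (Fin n))) = 0 := by
      intro i
      rw [hLiz i]
      have hcoe : ((0 : EuclideanSpace ℝ (Fin n) →L[ℝ] EuclideanSpace ℝ (Fin n)) :
          EuclideanSpace ℝ (Fin n) →ₗ[ℝ] EuclideanSpace ℝ (Fin n)) = 0 :=
        ContinuousLinearMap.coe_zero
      rw [hcoe]
      exact LinearMap.det_zero' ((EuclideanSpace.basisFun (Fin n) ℝ).toBasis)
    refine ⟨⟨0, hk⟩, ?_, ?_, ?_⟩
    · rw [hdz, hLiz]
      simp [zero_pow hn0]
    · rw [hM0', hLiz]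
      simp
    · intro i _
      rw [hLiz i, hM0']
      simp
  -- main case : 0 < M
  · set e := EuclideanSpace.basisFun (Fin n) ℝ with he
    set d : Fin k → ℝ := fun i => LinearMap.det
      ((Li i : EuclideanSpace ℝ (Fin n) →ₗ[ℝ] EuclideanSpace ℝ (Fin n))) with hd
    have hd0 : ∀ i, 0 ≤ d i := hdet
    set h : Fin k → ℝ := fun i => ∑ m, ‖Li i (e m)‖ ^ 2 with hh
    have hh0 : ∀ i, 0 ≤ h i := fun i => Finset.sum_nonneg fun m _ => sq_nonneg _
    set r : Fin k → ℝ := fun i => Real.sqrt (h i / n) with hr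
    have hr0 : ∀ i, 0 ≤ r i := fun i => Real.sqrt_nonneg _
    have hnR : (0:ℝ) < (n:ℝ) := by positivity
    have hr2 : ∀ i, r i ^ 2 = h i / n := fun i =>
      Real.sq_sqrt (div_nonneg (hh0 i) hnR.le)
    have hdr : ∀ i, d i ≤ r i ^ n := by
      intro i
      have := det_le_sqrt_avg_pow n hn0 e
        ((Li i : EuclideanSpace ℝ (Fin n) →ₗ[ℝ] EuclideanSpace ℝ (Fin n)))
      calc d i = |d i| := (abs_of_nonneg (hd0 i)).symm
        _ ≤ Real.sqrt ((∑ m, ‖Li i (e m)‖ ^ 2) / n) ^ n := this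
        _ = r i ^ n := rfl
    -- norms of basis vectors
    have hem : ∀ m : Fin n, ‖(e m : EuclideanSpace ℝ (Fin n))‖ = 1 :=
      fun m => e.orthonormal.1 m
    -- sum of h bounded
    have hsum_h : ∑ i, h i ≤ n * M ^ 2 := by
      have hswap : ∑ i : Fin k, ∑ m : Fin n, ‖Li i (e m)‖ ^ 2
          = ∑ m : Fin n, ∑ i : Fin k, ‖Li i (e m)‖ ^ 2 := Finset.sum_comm
      have hbd : ∀ m : Fin n, ∑ i, ‖Li i (e m)‖ ^ 2 ≤ M ^ 2 := by
        intro m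
        rw [pyth]
        have h1 : ‖L (e m)‖ ≤ M * ‖(e m : EuclideanSpace ℝ (Fin n))‖ := L.le_opNorm _
        rw [hem m, mul_one] at h1
        exact pow_le_pow_left₀ (norm_nonneg _) h1 2
      calc ∑ i, h i = ∑ i : Fin k, ∑ m : Fin n, ‖Li i (e m)‖ ^ 2 := rfl
        _ = ∑ m : Fin n, ∑ i : Fin k, ‖Li i (e m)‖ ^ 2 := hswap
        _ ≤ ∑ _m : Fin n, M ^ 2 := Finset.sum_le_sum fun m _ => hbd m
        _ = n * M ^ 2 := by
            rw [Finset.sum_const, Finset.card_univ, Fintype.card_fin, nsmul_eq_mul]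
    have hsum_r : ∑ i, r i ^ 2 ≤ M ^ 2 := by
      have h1 : ∑ i, r i ^ 2 = (∑ i, h i) / n := by
        rw [Finset.sum_div]
        exact Finset.sum_congr rfl fun i _ => hr2 i
      rw [h1, div_le_iff₀ hnR]
      linarith [hsum_h]
    have hrLi : ∀ i, r i ≤ ‖Li i‖ := by
      intro i
      apply sqle_aux (hr0 i) (norm_nonneg _)
      rw [hr2 i, div_le_iff₀ hnR]
      have h1 : ∀ m : Fin n, ‖Li i (e m)‖ ^ 2 ≤ ‖Li i‖ ^ 2 := by
        intro m
        have h2 : ‖Li i (e m)‖ ≤ ‖Li i‖ * ‖(e m : EuclideanSpace ℝ (Fin n))‖ :=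
          (Li i).le_opNorm _
        rw [hem m, mul_one] at h2
        exact pow_le_pow_left₀ (norm_nonneg _) h2 2
      calc h i ≤ ∑ _m : Fin n, ‖Li i‖ ^ 2 := Finset.sum_le_sum fun m _ => h1 m
        _ = ‖Li i‖ ^ 2 * n := by
            rw [Finset.sum_const, Finset.card_univ, Fintype.card_fin, nsmul_eq_mul, mul_comm]
    have hrM : ∀ i, r i ≤ M := fun i => (hrLi i).trans (hLiM i)
    -- choose i₀ maximizing r
    have hkne : (Finset.univ : Finset (Fin k)).Nonempty := ⟨⟨0, hk⟩, Finset.mem_univ _⟩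
    obtain ⟨i₀, -, hi₀⟩ := Finset.exists_max_image Finset.univ r hkne
    have hi₀' : ∀ i, r i ≤ r i₀ := fun i => hi₀ i (Finset.mem_univ i)
    set R := r i₀ with hR
    have hR0 : 0 ≤ R := hr0 i₀
    have hRM : R ≤ M := hrM i₀
    -- pow decompositions
    have hMn : M ^ n = M ^ (n - 2) * M ^ 2 := by
      rw [← pow_add]; congr 1; omega
    have hrn : ∀ i, r i ^ n ≤ R ^ (n - 2) * r i ^ 2 := by
      intro i
      have h1 : r i ^ n = r i ^ (n - 2) * r i ^ 2 := by rw [← pow_add]; congr 1; omega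
      rw [h1]
      exact mul_le_mul_of_nonneg_right (pow_le_pow_left₀ (hr0 i) (hi₀' i) _) (sq_nonneg _)
    have hsum_d : ∑ i, d i ≤ R ^ (n - 2) * M ^ 2 := by
      calc ∑ i, d i ≤ ∑ i, r i ^ n := Finset.sum_le_sum fun i _ => hdr i
        _ ≤ ∑ i, R ^ (n - 2) * r i ^ 2 := Finset.sum_le_sum fun i _ => hrn i
        _ = R ^ (n - 2) * ∑ i, r i ^ 2 := by rw [Finset.mul_sum]
        _ ≤ R ^ (n - 2) * M ^ 2 :=
            mul_le_mul_of_nonneg_left hsum_r (pow_nonneg hR0 _)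
    have hL' : M ^ n ≤ (1 + ε) * ∑ i, d i := hL
    -- M ≤ (1+ε) R
    have hMR : M ≤ (1 + ε) * R := by
      have hG1 : M ^ (n - 2) * M ^ 2 ≤ ((1 + ε) * R ^ (n - 2)) * M ^ 2 := by
        calc M ^ (n - 2) * M ^ 2 = M ^ n := hMn.symm
          _ ≤ (1 + ε) * ∑ i, d i := hL'
          _ ≤ (1 + ε) * (R ^ (n - 2) * M ^ 2) :=
              mul_le_mul_of_nonneg_left hsum_d h1ε.le
          _ = ((1 + ε) * R ^ (n - 2)) * M ^ 2 := by ring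
      have hM2 : (0:ℝ) < M ^ 2 := by positivity
      have hG2 : M ^ (n - 2) ≤ (1 + ε) * R ^ (n - 2) :=
        le_of_mul_le_mul_right hG1 hM2
      have hsplit : R ^ (n - 2) = R ^ (n - 3) * R := by rw [← pow_succ]; congr 1; omega
      have hsplit2 : M ^ (n - 2) = M ^ (n - 3) * M := by rw [← pow_succ]; congr 1; omega
      have h3 : M ^ (n - 3) * M ≤ (1 + ε) * (M ^ (n - 3) * R) := by
        calc M ^ (n - 3) * M = M ^ (n - 2) := hsplit2.symm
          _ ≤ (1 + ε) * R ^ (n - 2) := hG2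
          _ = (1 + ε) * (R ^ (n - 3) * R) := by rw [hsplit]
          _ ≤ (1 + ε) * (M ^ (n - 3) * R) := by
              apply mul_le_mul_of_nonneg_left _ h1ε.le
              exact mul_le_mul_of_nonneg_right (pow_le_pow_left₀ hR0 hRM _) hR0
      have hMn3 : (0:ℝ) < M ^ (n - 3) := pow_pos hMpos _
      have h4 : M ^ (n - 3) * M ≤ M ^ (n - 3) * ((1 + ε) * R) := by
        calc M ^ (n - 3) * M ≤ (1 + ε) * (M ^ (n - 3) * R) := h3
          _ = M ^ (n - 3) * ((1 + ε) * R) := by ring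
      exact le_of_mul_le_mul_left h4 hMn3
    have hRpos : 0 < R := by
      have h6 : M / (1 + ε) ≤ R := by
        rw [div_le_iff₀ h1ε]; linarith only [hMR]
      exact lt_of_lt_of_le (div_pos hMpos h1ε) h6
    -- conclusion 2
    have hc2 : M / (1 + ε) ≤ ‖Li i₀‖ := by
      rw [div_le_iff₀ h1ε]
      calc M ≤ (1 + ε) * R := hMR
        _ ≤ (1 + ε) * ‖Li i₀‖ := mul_le_mul_of_nonneg_left (hrLi i₀) h1ε.le
        _ = ‖Li i₀‖ * (1 + ε) := by ring
    -- the key lower bound for d i₀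
    have hsum_other : ∑ i ∈ Finset.univ.erase i₀, d i ≤ M ^ (n - 2) * (M ^ 2 - R ^ 2) := by
      have h1 : ∑ i ∈ Finset.univ.erase i₀, r i ^ 2 ≤ M ^ 2 - R ^ 2 := by
        have h2 : ∑ i ∈ Finset.univ.erase i₀, r i ^ 2 + R ^ 2 = ∑ i, r i ^ 2 :=
          Finset.sum_erase_add _ _ (Finset.mem_univ i₀)
        linarith [hsum_r]
      have h3 : ∑ i ∈ Finset.univ.erase i₀, d i
          ≤ R ^ (n - 2) * ∑ i ∈ Finset.univ.erase i₀, r i ^ 2 := by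
        rw [Finset.mul_sum]
        exact Finset.sum_le_sum fun i _ => (hdr i).trans (hrn i)
      have h4 : R ^ (n - 2) ≤ M ^ (n - 2) := pow_le_pow_left₀ hR0 hRM _
      calc ∑ i ∈ Finset.univ.erase i₀, d i
          ≤ R ^ (n - 2) * ∑ i ∈ Finset.univ.erase i₀, r i ^ 2 := h3
        _ ≤ M ^ (n - 2) * (M ^ 2 - R ^ 2) := by
            apply mul_le_mul h4 h1 (Finset.sum_nonneg fun i _ => sq_nonneg _)
              (pow_nonneg hM0 _)
    have hdsplit : ∑ i ∈ Finset.univ.erase i₀, d i + d i₀ = ∑ i, d i :=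
      Finset.sum_erase_add _ _ (Finset.mem_univ i₀)
    -- (1+ε)² R² ≥ M²
    have hMR2 : M ^ 2 ≤ (1 + ε) ^ 2 * R ^ 2 := by
      have := pow_le_pow_left₀ hM0 hMR 2
      calc M ^ 2 ≤ ((1 + ε) * R) ^ 2 := this
        _ = (1 + ε) ^ 2 * R ^ 2 := by ring
    set X := M ^ (n - 2) * (M ^ 2 - R ^ 2) with hX
    have hX0 : 0 ≤ X := by
      apply mul_nonneg (pow_nonneg hM0 _)
      exact sub_nonneg.mpr (pow_le_pow_left₀ hR0 hRM 2)
    have hX2 : (1 + ε) ^ 2 * X ≤ (2 * ε + ε ^ 2) * M ^ n := by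
      have h1 : (1 + ε) ^ 2 * (M ^ 2 - R ^ 2) ≤ (2 * ε + ε ^ 2) * M ^ 2 := by
        have e1 : (1 + ε) ^ 2 * (M ^ 2 - R ^ 2)
            = (1 + ε) ^ 2 * M ^ 2 - (1 + ε) ^ 2 * R ^ 2 := by ring
        have e2 : (1 + ε) ^ 2 * M ^ 2 - M ^ 2 = (2 * ε + ε ^ 2) * M ^ 2 := by ring
        linarith only [hMR2, e1, e2]
      calc (1 + ε) ^ 2 * X = M ^ (n - 2) * ((1 + ε) ^ 2 * (M ^ 2 - R ^ 2)) := by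
            rw [hX]; ring
        _ ≤ M ^ (n - 2) * ((2 * ε + ε ^ 2) * M ^ 2) :=
            mul_le_mul_of_nonneg_left h1 (pow_nonneg hM0 _)
        _ = (2 * ε + ε ^ 2) * M ^ n := by rw [hMn]; ring
    have hX1 : (1 + ε) * X ≤ (2 * ε + ε ^ 2) * M ^ n := by
      have h5 : (1 + ε) * X ≤ (1 + ε) ^ 2 * X := by
        have e : (1 + ε) ^ 2 * X = (1 + ε) * X + (ε + ε ^ 2) * X := by ring
        have hεX : 0 ≤ (ε + ε ^ 2) * X := mul_nonneg (by positivity) hX0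
        linarith only [e, hεX]
      linarith only [hX2, h5]
    -- (1+ε) d i₀ ≥ (1 - 2ε - ε²) M^n
    have hdlow : (1 - 2 * ε - ε ^ 2) * M ^ n ≤ (1 + ε) * d i₀ := by
      have h1 : (1 + ε) * d i₀ = (1 + ε) * ∑ i, d i
          - (1 + ε) * ∑ i ∈ Finset.univ.erase i₀, d i := by
        rw [← hdsplit]; ring
      have h2 : (1 + ε) * ∑ i ∈ Finset.univ.erase i₀, d i ≤ (1 + ε) * X :=
        mul_le_mul_of_nonneg_left hsum_other h1ε.le
      rw [h1]
      have h3 : M ^ n ≤ (1 + ε) * ∑ i, d i := hL'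
      linarith [hX1]
    have hMn0 : (0:ℝ) ≤ M ^ n := pow_nonneg hM0 n
    have hkey : (1 - 4 * ε) * M ^ n ≤ d i₀ := by
      have h1 : (1 + ε) * ((1 - 4 * ε) * M ^ n) ≤ (1 + ε) * d i₀ := by
        have hpos : 0 ≤ (ε + 3 * ε ^ 2) * M ^ n := mul_nonneg (by positivity) hMn0
        have e : (1 + ε) * ((1 - 4 * ε) * M ^ n)
            = (1 - 2 * ε - ε ^ 2) * M ^ n - (ε + 3 * ε ^ 2) * M ^ n := by ring
        linarith only [hdlow, hpos, e]
      exact le_of_mul_le_mul_left h1 h1ε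
    -- conclusion 1
    have hc1 : ‖Li i₀‖ ^ n ≤ (1 + 7 * k * Real.sqrt ε) * d i₀ := by
      have ha : ‖Li i₀‖ ^ n ≤ M ^ n := pow_le_pow_left₀ (norm_nonneg _) (hLiM i₀) n
      set s := Real.sqrt ε with hs
      have hs2 : s ^ 2 = ε := Real.sq_sqrt hε.le
      have hs0 : 0 < s := Real.sqrt_pos.mpr hε
      have hs1 : s ≤ 1 / 10 := by nlinarith only [hs2, hs0, hε100]
      have hesc : 1 ≤ (1 + 7 * s) * (1 - 4 * ε) := by
        have c1 : s ^ 2 ≤ s / 10 := by nlinarith only [hs0.le, hs1]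
        have c4 : ε ≤ s / 10 := by rw [← hs2]; exact c1
        have c3 : s * ε ≤ s / 100 := by
          rw [← hs2]
          nlinarith only [hs0.le, hs1, c1]
        nlinarith only [c3, c4, hs0.le]
      have h7s : (0:ℝ) ≤ 1 + 7 * s := by linarith [hs0.le]
      have h2 : M ^ n ≤ (1 + 7 * k * s) * d i₀ := by
        calc M ^ n ≤ ((1 + 7 * s) * (1 - 4 * ε)) * M ^ n :=
              le_mul_of_one_le_left hMn0 hesc
          _ = (1 + 7 * s) * ((1 - 4 * ε) * M ^ n) := by ring
          _ ≤ (1 + 7 * s) * d i₀ := mul_le_mul_of_nonneg_left hkey h7s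
          _ ≤ (1 + 7 * k * s) * d i₀ := by
              apply mul_le_mul_of_nonneg_right _ (hd0 i₀)
              have : 0 ≤ ((k:ℝ) - 1) * s := mul_nonneg (by linarith only [hk1]) hs0.le
              linarith only [this]
      exact ha.trans h2
    -- conclusion 3
    have hc3 : ∀ i, i ≠ i₀ → ‖Li i‖ ≤ 5 * Real.sqrt k * ε ^ ((1:ℝ)/4) * M := by
      intro i hi
      have hC0 : (0:ℝ) ≤ 5 * Real.sqrt k * ε ^ ((1:ℝ)/4) * M := by positivity
      have hC2 : (5 * Real.sqrt k * ε ^ ((1:ℝ)/4) * M) ^ 2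
          = 25 * k * Real.sqrt ε * M ^ 2 := by
        have h1 : (Real.sqrt (k:ℝ)) ^ 2 = (k:ℝ) := Real.sq_sqrt (by positivity)
        have h2 : (ε ^ ((1:ℝ)/4)) ^ 2 = Real.sqrt ε := by
          rw [← Real.rpow_natCast (ε ^ ((1:ℝ)/4)) 2, ← Real.rpow_mul hε.le,
            Real.sqrt_eq_rpow]
          norm_num
        calc (5 * Real.sqrt k * ε ^ ((1:ℝ)/4) * M) ^ 2
            = 25 * (Real.sqrt (k:ℝ)) ^ 2 * (ε ^ ((1:ℝ)/4)) ^ 2 * M ^ 2 := by ring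
          _ = 25 * k * Real.sqrt ε * M ^ 2 := by rw [h1, h2]
      refine ContinuousLinearMap.opNorm_le_bound _ hC0 fun v => ?_
      -- lower bound for ‖Li i₀ v‖
      have hA := det_mul_norm_le n hn0 (Li i₀) v
      rw [abs_of_nonneg (hd0 i₀)] at hA
      have hlow : (1 - 4 * ε) * M ^ n * ‖v‖ ≤ ‖Li i₀ v‖ * M ^ (n - 1) := by
        calc (1 - 4 * ε) * M ^ n * ‖v‖ ≤ d i₀ * ‖v‖ :=
              mul_le_mul_of_nonneg_right hkey (norm_nonneg v)
          _ ≤ ‖Li i₀ v‖ * ‖Li i₀‖ ^ (n - 1) := hA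
          _ ≤ ‖Li i₀ v‖ * M ^ (n - 1) :=
              mul_le_mul_of_nonneg_left
                (pow_le_pow_left₀ (norm_nonneg _) (hLiM i₀) _) (norm_nonneg _)
      have hMn1pos : (0:ℝ) < M ^ (n - 1) := pow_pos hMpos _
      have hMn1 : M ^ n = M * M ^ (n - 1) := by rw [← pow_succ']; congr 1; omega
      have hlow2 : (1 - 4 * ε) * M * ‖v‖ ≤ ‖Li i₀ v‖ := by
        apply le_of_mul_le_mul_right _ hMn1pos
        calc (1 - 4 * ε) * M * ‖v‖ * M ^ (n - 1)
            = (1 - 4 * ε) * (M * M ^ (n - 1)) * ‖v‖ := by ring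
          _ = (1 - 4 * ε) * M ^ n * ‖v‖ := by rw [← hMn1]
          _ ≤ ‖Li i₀ v‖ * M ^ (n - 1) := hlow
      -- Pythagoras pair
      have hpair : ‖Li i v‖ ^ 2 + ‖Li i₀ v‖ ^ 2 ≤ M ^ 2 * ‖v‖ ^ 2 := by
        have h1 : ‖Li i v‖ ^ 2 + ‖Li i₀ v‖ ^ 2 ≤ ∑ j, ‖Li j v‖ ^ 2 := by
          have h2 := Finset.sum_le_sum_of_subset_of_nonneg
            (Finset.subset_univ ({i, i₀} : Finset (Fin k)))
            (fun j _ _ => sq_nonneg ‖Li j v‖)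
          rwa [Finset.sum_pair hi] at h2
        have h3 := pyth v
        have h4 : ‖L v‖ ≤ M * ‖v‖ := L.le_opNorm v
        have h5 : ‖L v‖ ^ 2 ≤ (M * ‖v‖) ^ 2 := pow_le_pow_left₀ (norm_nonneg _) h4 2
        have h6 : (M * ‖v‖) ^ 2 = M ^ 2 * ‖v‖ ^ 2 := by ring
        linarith [h1, h3, h5]
      have hlow3 : ((1 - 4 * ε) * M * ‖v‖) ^ 2 ≤ ‖Li i₀ v‖ ^ 2 := by
        apply pow_le_pow_left₀ _ hlow2
        have : (0:ℝ) < 1 - 4 * ε := by linarith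
        positivity
      have hsε : ε ≤ Real.sqrt ε := by
        have ht1 : Real.sqrt ε ≤ 1 / 10 := by
          nlinarith only [Real.sq_sqrt hε.le, Real.sqrt_nonneg ε, hε100]
        nlinarith only [ht1, Real.sqrt_nonneg ε, Real.sq_sqrt hε.le]
      have hsq : ‖Li i v‖ ^ 2 ≤ (5 * Real.sqrt k * ε ^ ((1:ℝ)/4) * M) ^ 2 * ‖v‖ ^ 2 := by
        rw [hC2]
        have t1 : ‖Li i v‖ ^ 2 ≤ (8 * ε - 16 * ε ^ 2) * (M * ‖v‖) ^ 2 := by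
          linarith only [hpair, hlow3]
        have tcoef : 8 * ε - 16 * ε ^ 2 ≤ 25 * (k:ℝ) * Real.sqrt ε := by
          have c1 : 8 * ε ≤ 8 * Real.sqrt ε := by linarith [hsε]
          have c2 : 8 * Real.sqrt ε ≤ 25 * (k:ℝ) * Real.sqrt ε := by
            have : 0 ≤ (25 * (k:ℝ) - 8) * Real.sqrt ε :=
              mul_nonneg (by linarith only [hk1]) (Real.sqrt_nonneg ε)
            linarith only [this]
          linarith only [c1, c2, sq_nonneg ε]
        have t2 : (8 * ε - 16 * ε ^ 2) * (M * ‖v‖) ^ 2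
            ≤ (25 * (k:ℝ) * Real.sqrt ε) * (M * ‖v‖) ^ 2 :=
          mul_le_mul_of_nonneg_right tcoef (sq_nonneg _)
        calc ‖Li i v‖ ^ 2 ≤ (8 * ε - 16 * ε ^ 2) * (M * ‖v‖) ^ 2 := t1
          _ ≤ (25 * (k:ℝ) * Real.sqrt ε) * (M * ‖v‖) ^ 2 := t2
          _ = 25 * (k:ℝ) * Real.sqrt ε * M ^ 2 * ‖v‖ ^ 2 := by ring
      have e : ((5 * Real.sqrt k * ε ^ ((1:ℝ)/4) * M) * ‖v‖) ^ 2
          = (5 * Real.sqrt k * ε ^ ((1:ℝ)/4) * M) ^ 2 * ‖v‖ ^ 2 := by ring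
      exact sqle_aux (norm_nonneg (Li i v)) (mul_nonneg hC0 (norm_nonneg v))
        (by rw [e]; exact hsq)
    exact ⟨i₀, hc1, hc2, hc3⟩
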